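/- Let Ω ⊆ ℝᵈ be a Lebesgue-measurable set with Lebesgue measure |Ω| = 1, and let b : Ω → [0, B] be a measurable function with ∫_Ω b(x) dx = 1. Then there exist ε₀ > 0 and C > 0 such that for all ε₁, ε₃ ∈ (0, ε₀] the following holds: there is an a.e.-unique measurable function r : Ω → ℝ with 0 < r < (1 − ε₃ b)/ε₁ a.e., with log( r/(1 − ε₁ r − ε₃ b) ) + ε₁ r/(1 − ε₁ r − ε₃ b) a.e. equal to a constant on Ω, and with ∫_Ω r = 1; and this r satisfies ess sup_{x ∈ Ω} | r(x) − 1 − ε₃ (1 − b(x)) | ≤ C (ε₁ + ε₃)². -/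

import Mathlib

open MeasureTheory


open MeasureTheory

noncomputable section
namespace EP2

/-- smallness threshold -/
def eps0 (B : ℝ) : ℝ := (100000*(B+1)^2)⁻¹

/-- the entropy variable as a function of r (and β = b(x)) -/
def phi (e1 e3 β r : ℝ) : ℝ :=
  Real.log r - Real.log (1 - e1*r - e3*β) + e1*r/(1 - e1*r - e3*β)

def C1 (B : ℝ) : ℝ := 100*(B+1)^2

/-- hypotheses package -/
structure Sm (B e1 e3 : ℝ) : Prop where
  hB : 1 ≤ B
  he1 : 0 < e1
  he3 : 0 < e3
  hs1 : e1 ≤ eps0 B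
  hs3 : e3 ≤ eps0 B

namespace Sm

variable {B e1 e3 : ℝ}

theorem key1 (H : Sm B e1 e3) : e1 * (100000*(B+1)^2) ≤ 1 := by
  have h2 : (0:ℝ) < 100000*(B+1)^2 := by nlinarith [H.hB]
  have := H.hs1
  rw [eps0, inv_eq_one_div, le_div_iff₀ h2] at this
  exact this

theorem key3 (H : Sm B e1 e3) : e3 * (100000*(B+1)^2) ≤ 1 := by
  have h2 : (0:ℝ) < 100000*(B+1)^2 := by nlinarith [H.hB]
  have := H.hs3
  rw [eps0, inv_eq_one_div, le_div_iff₀ h2] at this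
  exact this

theorem e1_small (H : Sm B e1 e3) : e1 ≤ 1/400000 := by
  have := H.key1
  nlinarith [H.hB, H.he1.le, sq_nonneg (B+1), sq_nonneg (B-1)]

theorem e3_small (H : Sm B e1 e3) : e3 ≤ 1/400000 := by
  have := H.key3
  nlinarith [H.hB, H.he3.le, sq_nonneg (B+1), sq_nonneg (B-1)]

theorem e3B_small (H : Sm B e1 e3) : e3 * B ≤ 1/100000 := by
  have := H.key3
  nlinarith [H.hB, H.he3.le, sq_nonneg (B+1), mul_pos H.he3 (by linarith [H.hB] : (0:ℝ) < B)]

theorem e1B_small (H : Sm B e1 e3) : e1 * B ≤ 1/100000 := by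
  have := H.key1
  nlinarith [H.hB, H.he1.le, sq_nonneg (B+1), mul_pos H.he1 (by linarith [H.hB] : (0:ℝ) < B)]

theorem e3β_small (H : Sm B e1 e3) {β : ℝ} (h0 : 0 ≤ β) (hb : β ≤ B) : e3 * β ≤ 1/100000 := by
  have := H.e3B_small
  nlinarith [H.he3.le]

end Sm

/-- strict monotonicity of `phi` in `r` -/
theorem phi_lt_phi {e1 e3 β r1 r2 : ℝ} (he1 : 0 < e1) (he3 : 0 ≤ e3) (hβ : 0 ≤ β)
    (h1 : 0 < r1) (h12 : r1 < r2) (h2 : e1*r2 < 1 - e3*β) :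
    phi e1 e3 β r1 < phi e1 e3 β r2 := by
  have hs2 : 0 < 1 - e1*r2 - e3*β := by nlinarith
  have hss : 1 - e1*r2 - e3*β < 1 - e1*r1 - e3*β := by nlinarith
  have hlog1 : Real.log r1 < Real.log r2 := Real.log_lt_log h1 h12
  have hlog2 : Real.log (1 - e1*r2 - e3*β) < Real.log (1 - e1*r1 - e3*β) :=
    Real.log_lt_log hs2 hss
  have hdiv : e1*r1/(1 - e1*r1 - e3*β) ≤ e1*r2/(1 - e1*r2 - e3*β) :=
    div_le_div₀ (by nlinarith) (by nlinarith) hs2 hss.le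
  unfold phi; linarith

theorem phi_le_phi {e1 e3 β r1 r2 : ℝ} (he1 : 0 < e1) (he3 : 0 ≤ e3) (hβ : 0 ≤ β)
    (h1 : 0 < r1) (h12 : r1 ≤ r2) (h2 : e1*r2 < 1 - e3*β) :
    phi e1 e3 β r1 ≤ phi e1 e3 β r2 := by
  rcases eq_or_lt_of_le h12 with h | h
  · rw [h]
  · exact (phi_lt_phi he1 he3 hβ h1 h h2).le

/-- monotonicity of `phi` in `β` -/
theorem phi_mono_beta {e1 e3 β1 β2 r : ℝ} (he1 : 0 < e1) (he3 : 0 ≤ e3)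
    (hβ1 : 0 ≤ β1) (hβ : β1 ≤ β2) (hr : 0 < r) (h2 : e1*r < 1 - e3*β2) :
    phi e1 e3 β1 r ≤ phi e1 e3 β2 r := by
  have hs2 : 0 < 1 - e1*r - e3*β2 := by nlinarith
  have hss : 1 - e1*r - e3*β2 ≤ 1 - e1*r - e3*β1 := by nlinarith
  have hlog : Real.log (1 - e1*r - e3*β2) ≤ Real.log (1 - e1*r - e3*β1) :=
    Real.log_le_log hs2 hss
  have hdiv : e1*r/(1 - e1*r - e3*β1) ≤ e1*r/(1 - e1*r - e3*β2) :=
    div_le_div₀ (by nlinarith) le_rfl hs2 hss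
  unfold phi; linarith

/-- increments of phi dominate increments of log -/
theorem phi_increment {e1 e3 β r1 r2 : ℝ} (he1 : 0 < e1) (he3 : 0 ≤ e3) (hβ : 0 ≤ β)
    (h1 : 0 < r1) (h12 : r1 ≤ r2) (h2 : e1*r2 < 1 - e3*β) :
    Real.log r2 - Real.log r1 ≤ phi e1 e3 β r2 - phi e1 e3 β r1 := by
  have hs2 : 0 < 1 - e1*r2 - e3*β := by nlinarith
  have hss : 1 - e1*r2 - e3*β ≤ 1 - e1*r1 - e3*β := by nlinarith
  have hlog2 : Real.log (1 - e1*r2 - e3*β) ≤ Real.log (1 - e1*r1 - e3*β) :=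
    Real.log_le_log hs2 hss
  have hdiv : e1*r1/(1 - e1*r1 - e3*β) ≤ e1*r2/(1 - e1*r2 - e3*β) :=
    div_le_div₀ (by nlinarith) (by nlinarith) hs2 hss
  unfold phi; linarith

/-- log increment lower bound -/
theorem log_diff_ge {a t : ℝ} (ha : 0 < a) (ht : 0 ≤ t) :
    t/(a+t) ≤ Real.log (a+t) - Real.log a := by
  have hat : 0 < a + t := by linarith
  have h := Real.log_le_sub_one_of_pos (show (0:ℝ) < a/(a+t) by positivity)
  rw [Real.log_div ha.ne' hat.ne'] at h
  have : a/(a+t) - 1 = -(t/(a+t)) := by field_simp; ring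
  rw [this] at h
  linarith

/-- second order bound on log(1+u) -/
theorem log_one_add_bound {u : ℝ} (h : |u| ≤ 1/2) : |Real.log (1+u) - u| ≤ 2*u^2 := by
  have h1 : -(1/2) ≤ u := neg_le_of_abs_le h
  have h2 : u ≤ 1/2 := le_of_abs_le h
  have h1u : 0 < 1 + u := by linarith
  have hup : Real.log (1+u) ≤ u := by
    have := Real.log_le_sub_one_of_pos h1u
    linarith
  have hlow : u - 2*u^2 ≤ Real.log (1+u) := by
    have hinv := Real.log_le_sub_one_of_pos (show (0:ℝ) < (1+u)⁻¹ by positivity)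
    rw [Real.log_inv] at hinv
    have hkey : (1+u)⁻¹ ≤ 1 - u + 2*u^2 := by
      rw [inv_eq_one_div, div_le_iff₀ h1u]
      nlinarith [sq_nonneg u]
    nlinarith
  rw [abs_le]; constructor <;> nlinarith [sq_nonneg u]




set_option maxHeartbeats 1000000 in
/-- existence of a root of `phi · = χ` -/
theorem exists_root {B e1 e3 : ℝ} (H : Sm B e1 e3) {β : ℝ} (hβ0 : 0 ≤ β) (hβB : β ≤ B)
    (χ : ℝ) : ∃ r, 0 < r ∧ e1*r < 1 - e3*β ∧ phi e1 e3 β r = χ := by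
  have he1 := H.he1
  have he3 := H.he3
  have hsm1 := H.e1_small
  have hsmβ := H.e3β_small hβ0 hβB
  have hM : (0:ℝ) < 1 - e3*β := by linarith
  -- lower endpoint
  have halo0 : 0 < min (Real.exp (χ - 2)) 1 := lt_min (Real.exp_pos _) one_pos
  set alo : ℝ := min (Real.exp (χ - 2)) 1 with halo
  have halo1 : alo ≤ 1 := min_le_right _ _
  have hmm : e1 * alo ≤ e1 * 1 := mul_le_mul_of_nonneg_left halo1 he1.le
  have haloM : e1*alo < 1 - e3*β := by linarith
  have hsalo : (1:ℝ)/2 ≤ 1 - e1*alo - e3*β := by linarith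
  have hphi_lo : phi e1 e3 β alo ≤ χ := by
    have hlog : Real.log alo ≤ χ - 2 := by
      calc Real.log alo ≤ Real.log (Real.exp (χ-2)) :=
            Real.log_le_log halo0 (min_le_left _ _)
        _ = χ - 2 := Real.log_exp _
    have hs0 : 0 < 1 - e1*alo - e3*β := by linarith
    have hlog2 : Real.log (1/2 : ℝ) ≤ Real.log (1 - e1*alo - e3*β) :=
      Real.log_le_log (by norm_num) hsalo
    have hl2 : Real.log (1/2 : ℝ) = - Real.log 2 := by
      rw [one_div, Real.log_inv]
    have hlog2' : - Real.log (1 - e1*alo - e3*β) ≤ Real.log 2 := by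
      rw [hl2] at hlog2; linarith
    have hdiv : e1*alo/(1 - e1*alo - e3*β) ≤ 1 := by
      rw [div_le_one hs0]; nlinarith
    have h2 : Real.log 2 ≤ 0.6931471808 := Real.log_two_lt_d9.le
    unfold phi; linarith
  -- upper endpoint
  have hc1 : 1 ≤ max χ 0 + 1 := by linarith [le_max_right χ 0]
  set c : ℝ := max χ 0 + 1 with hc
  have hcχ : χ ≤ c := by have := le_max_left χ 0; linarith
  have hc0 : (0:ℝ) < c + 1 := by linarith
  set ahi : ℝ := ((1 - e3*β)/e1) * (c/(c+1)) with hahi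
  have hahi0 : 0 < ahi := by
    apply mul_pos (div_pos hM he1) (div_pos (by linarith) hc0)
  have he1ahi : e1 * ahi = (1 - e3*β) * (c/(c+1)) := by
    rw [hahi]; field_simp
  have hcc1 : c/(c+1) < 1 := by rw [div_lt_one hc0]; linarith
  have hahiM : e1*ahi < 1 - e3*β := by
    rw [he1ahi]; nlinarith
  have hs_ahi : 1 - e1*ahi - e3*β = (1 - e3*β)/(c+1) := by
    rw [he1ahi]; field_simp; ring
  have hphi_hi : χ ≤ phi e1 e3 β ahi := by
    have hs0 : 0 < 1 - e1*ahi - e3*β := by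
      rw [hs_ahi]; positivity
    have hdiv : e1*ahi/(1 - e1*ahi - e3*β) = c := by
      rw [hs_ahi, he1ahi]
      rw [div_eq_iff (by positivity)]
      field_simp
    have hratio : 1 ≤ ahi/(1 - e1*ahi - e3*β) := by
      rw [hs_ahi, one_le_div (by positivity)]
      have h1 : 1 ≤ c/e1 := by rw [le_div_iff₀ he1]; nlinarith
      have h2 : (1 - e3*β)/(c+1) * 1 ≤ (1 - e3*β)/(c+1) * (c/e1) :=
        mul_le_mul_of_nonneg_left h1 (by positivity)
      calc (1 - e3*β)/(c+1) = (1 - e3*β)/(c+1) * 1 := (mul_one _).symm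
        _ ≤ (1 - e3*β)/(c+1) * (c/e1) := h2
        _ = ahi := by rw [hahi]; ring
    have hlog : 0 ≤ Real.log ahi - Real.log (1 - e1*ahi - e3*β) := by
      rw [← Real.log_div hahi0.ne' hs0.ne']
      exact Real.log_nonneg hratio
    unfold phi; rw [hdiv]; linarith
  -- IVT
  have hsub : Set.uIcc alo ahi ⊆ {r : ℝ | 0 < r ∧ e1*r < 1 - e3*β} := by
    intro r hr
    rw [Set.mem_uIcc] at hr
    constructor
    · rcases hr with ⟨h, _⟩ | ⟨h, _⟩ <;> linarith [halo0, hahi0]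
    · rcases hr with ⟨_, h⟩ | ⟨_, h⟩ <;> nlinarith [haloM, hahiM, he1.le]
  have hcont : ContinuousOn (phi e1 e3 β) (Set.uIcc alo ahi) := by
    have h1 : ContinuousOn (fun r : ℝ => Real.log r) (Set.uIcc alo ahi) :=
      ContinuousOn.log continuousOn_id (fun x hx => (hsub hx).1.ne')
    have hsden : ContinuousOn (fun r : ℝ => 1 - e1*r - e3*β) (Set.uIcc alo ahi) := by
      fun_prop
    have h2 : ContinuousOn (fun r : ℝ => Real.log (1 - e1*r - e3*β)) (Set.uIcc alo ahi) :=
      ContinuousOn.log hsden (fun x hx => by have := (hsub hx).2; intro h0; nlinarith)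
    have h3 : ContinuousOn (fun r : ℝ => e1*r/(1 - e1*r - e3*β)) (Set.uIcc alo ahi) := by
      apply ContinuousOn.div (by fun_prop) hsden
      intro x hx; have := (hsub hx).2; intro h0; nlinarith
    exact (h1.sub h2).add h3
  have hmem : χ ∈ Set.uIcc (phi e1 e3 β alo) (phi e1 e3 β ahi) := by
    rw [Set.mem_uIcc]; left; exact ⟨hphi_lo, hphi_hi⟩
  obtain ⟨r, hr, hrphi⟩ := intermediate_value_uIcc hcont hmem
  exact ⟨r, (hsub hr).1, (hsub hr).2, hrphi⟩

/-- uniqueness of the root -/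
theorem root_unique {e1 e3 β r1 r2 : ℝ} (he1 : 0 < e1) (he3 : 0 ≤ e3) (hβ : 0 ≤ β)
    (h10 : 0 < r1) (h1M : e1*r1 < 1 - e3*β) (h20 : 0 < r2) (h2M : e1*r2 < 1 - e3*β)
    (h : phi e1 e3 β r1 = phi e1 e3 β r2) : r1 = r2 := by
  rcases lt_trichotomy r1 r2 with hlt | heq | hgt
  · exact absurd h (phi_lt_phi he1 he3 hβ h10 hlt h2M).ne
  · exact heq
  · exact absurd h.symm (phi_lt_phi he1 he3 hβ h20 hgt h1M).ne

def clamp (B β : ℝ) : ℝ := min (max β 0) B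

theorem clamp_nonneg {B β : ℝ} (hB : 0 ≤ B) : 0 ≤ clamp B β :=
  le_min (le_max_right _ _) hB

theorem clamp_le {B β : ℝ} : clamp B β ≤ B := min_le_right _ _

theorem clamp_eq {B β : ℝ} (h0 : 0 ≤ β) (hB : β ≤ B) : clamp B β = β := by
  rw [clamp, max_eq_left h0, min_eq_left hB]

theorem clamp_mono {B : ℝ} : Monotone (clamp B) := fun a b h =>
  min_le_min (max_le_max h le_rfl) le_rfl

open Classical in
/-- the root function (clamped in β) -/
def Rt (e1 e3 B χ β : ℝ) : ℝ :=
  if h : ∃ r, 0 < r ∧ e1*r < 1 - e3*(clamp B β) ∧ phi e1 e3 (clamp B β) r = χ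
  then h.choose else 0

theorem Rt_spec {B e1 e3 : ℝ} (H : Sm B e1 e3) (χ β : ℝ) :
    0 < Rt e1 e3 B χ β ∧ e1*(Rt e1 e3 B χ β) < 1 - e3*(clamp B β) ∧
      phi e1 e3 (clamp B β) (Rt e1 e3 B χ β) = χ := by
  have hex := exists_root H (clamp_nonneg (B := B) (β := β) (by linarith [H.hB]))
    (clamp_le (B := B) (β := β)) χ
  rw [Rt, dif_pos hex]
  exact hex.choose_spec

theorem Rt_antitone {B e1 e3 : ℝ} (H : Sm B e1 e3) (χ : ℝ) :
    Antitone (Rt e1 e3 B χ) := by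
  intro β1 β2 h
  obtain ⟨h10, h1M, h1phi⟩ := Rt_spec H χ β1
  obtain ⟨h20, h2M, h2phi⟩ := Rt_spec H χ β2
  have hc12 : clamp B β1 ≤ clamp B β2 := clamp_mono h
  have hc10 : 0 ≤ clamp B β1 := clamp_nonneg (by linarith [H.hB])
  by_contra hlt
  push_neg at hlt
  have hM1 : e1 * Rt e1 e3 B χ β2 < 1 - e3*(clamp B β1) := by
    have : e3*(clamp B β1) ≤ e3*(clamp B β2) :=
      mul_le_mul_of_nonneg_left hc12 H.he3.le
    linarith
  have h1 : phi e1 e3 (clamp B β1) (Rt e1 e3 B χ β1)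
      < phi e1 e3 (clamp B β1) (Rt e1 e3 B χ β2) :=
    phi_lt_phi H.he1 H.he3.le hc10 h10 hlt hM1
  have h2 : phi e1 e3 (clamp B β1) (Rt e1 e3 B χ β2)
      ≤ phi e1 e3 (clamp B β2) (Rt e1 e3 B χ β2) :=
    phi_mono_beta H.he1 H.he3.le hc10 hc12 h20 h2M
  rw [h1phi, h2phi] at *
  linarith

theorem Rt_measurable {B e1 e3 : ℝ} (H : Sm B e1 e3) (χ : ℝ) :
    Measurable (Rt e1 e3 B χ) :=
  (Rt_antitone H χ).measurable

/-- monotone + Lipschitz in χ -/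
theorem Rt_chi_mono_lip {B e1 e3 : ℝ} (H : Sm B e1 e3) {χ χ' : ℝ} (h : χ ≤ χ') (β : ℝ) :
    Rt e1 e3 B χ β ≤ Rt e1 e3 B χ' β ∧
      Rt e1 e3 B χ' β - Rt e1 e3 B χ β ≤ (χ' - χ)/e1 := by
  obtain ⟨h10, h1M, h1phi⟩ := Rt_spec H χ β
  obtain ⟨h20, h2M, h2phi⟩ := Rt_spec H χ' β
  have hc0 : 0 ≤ clamp B β := clamp_nonneg (by linarith [H.hB])
  have hmono : Rt e1 e3 B χ β ≤ Rt e1 e3 B χ' β := by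
    by_contra hlt
    push_neg at hlt
    have := phi_lt_phi H.he1 H.he3.le hc0 h20 hlt h1M
    rw [h1phi, h2phi] at this
    linarith
  refine ⟨hmono, ?_⟩
  have hinc := phi_increment H.he1 H.he3.le hc0 h10 hmono h2M
  rw [h1phi, h2phi] at hinc
  have hlog := log_diff_ge (a := Rt e1 e3 B χ β)
    (t := Rt e1 e3 B χ' β - Rt e1 e3 B χ β) h10 (by linarith)
  rw [show Rt e1 e3 B χ β + (Rt e1 e3 B χ' β - Rt e1 e3 B χ β) = Rt e1 e3 B χ' β
    by ring] at hlog
  -- (r' - r)/r' ≥ e1 (r' - r) since r' ≤ 1/e1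
  have hr2 : e1 * Rt e1 e3 B χ' β ≤ 1 := by
    have : 0 ≤ e3 * clamp B β := mul_nonneg H.he3.le hc0
    linarith
  have hkey : e1 * (Rt e1 e3 B χ' β - Rt e1 e3 B χ β)
      ≤ (Rt e1 e3 B χ' β - Rt e1 e3 B χ β) / Rt e1 e3 B χ' β := by
    rw [le_div_iff₀ h20]
    nlinarith
  have hchain : e1 * (Rt e1 e3 B χ' β - Rt e1 e3 B χ β) ≤ χ' - χ := by linarith
  rw [le_div_iff₀ H.he1]
  linarith

/-- at χ = -1 the root is at most 1/2 -/
theorem Rt_le_half {B e1 e3 : ℝ} (H : Sm B e1 e3) (β : ℝ) :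
    Rt e1 e3 B (-1) β ≤ 1/2 := by
  obtain ⟨h0, hM, hphi⟩ := Rt_spec H (-1) β
  set ρ := Rt e1 e3 B (-1) β
  set γ := clamp B β
  have hγ0 : 0 ≤ γ := clamp_nonneg (by linarith [H.hB])
  have hs0 : 0 < 1 - e1*ρ - e3*γ := by linarith [mul_nonneg H.he3.le hγ0]
  have hs1 : 1 - e1*ρ - e3*γ ≤ 1 := by
    nlinarith [mul_pos H.he1 h0, mul_nonneg H.he3.le hγ0]
  have hlogs : Real.log (1 - e1*ρ - e3*γ) ≤ 0 := Real.log_nonpos hs0.le hs1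
  have hdiv : 0 ≤ e1*ρ/(1 - e1*ρ - e3*γ) :=
    div_nonneg (mul_pos H.he1 h0).le hs0.le
  have hlogρ : Real.log ρ ≤ -1 := by
    have := hphi; unfold phi at this; linarith
  have : ρ ≤ Real.exp (-1) := by
    calc ρ = Real.exp (Real.log ρ) := (Real.exp_log h0).symm
      _ ≤ Real.exp (-1) := Real.exp_le_exp.2 hlogρ
  have hexp : Real.exp (-1) ≤ 1/2 := by
    rw [Real.exp_neg]
    rw [inv_le_comm₀ (Real.exp_pos 1) (by norm_num)]
    have := Real.add_one_le_exp 1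
    linarith
  linarith

/-- at χ = 3 the root is at least 2 -/
theorem Rt_ge_two {B e1 e3 : ℝ} (H : Sm B e1 e3) (β : ℝ) :
    2 ≤ Rt e1 e3 B 3 β := by
  obtain ⟨h0, hM, hphi⟩ := Rt_spec H 3 β
  set ρ := Rt e1 e3 B 3 β
  set γ := clamp B β
  have hγ0 : 0 ≤ γ := clamp_nonneg (by linarith [H.hB])
  have hγB : γ ≤ B := clamp_le
  have he3γ : e3*γ ≤ 1/100000 := H.e3β_small hγ0 hγB
  have he1s := H.e1_small
  by_contra hlt
  push_neg at hlt
  have h2M : e1*(2:ℝ) < 1 - e3*γ := by linarith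
  have hstep := phi_lt_phi H.he1 H.he3.le hγ0 h0 hlt h2M
  rw [hphi] at hstep
  -- phi at 2 is at most 3
  have hs0 : (1:ℝ)/2 ≤ 1 - e1*2 - e3*γ := by linarith
  have hs0' : 0 < 1 - e1*2 - e3*γ := by linarith
  have hlog2 : Real.log (1/2 : ℝ) ≤ Real.log (1 - e1*2 - e3*γ) :=
    Real.log_le_log (by norm_num) hs0
  have hl2 : Real.log (1/2 : ℝ) = - Real.log 2 := by rw [one_div, Real.log_inv]
  have hldenom : - Real.log (1 - e1*2 - e3*γ) ≤ Real.log 2 := by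
    rw [hl2] at hlog2; linarith
  have hdiv : e1*2/(1 - e1*2 - e3*γ) ≤ 1 := by
    rw [div_le_one hs0']; linarith
  have hl2' : Real.log 2 ≤ 0.6931471808 := Real.log_two_lt_d9.le
  have : phi e1 e3 γ 2 ≤ 3 := by
    unfold phi; linarith
  linarith

set_option maxHeartbeats 2000000 in
/-- value of phi at the approximate root 1 + e3(1-β) -/
theorem phi_rbar {B e1 e3 : ℝ} (H : Sm B e1 e3) {β : ℝ} (hβ0 : 0 ≤ β) (hβB : β ≤ B) :
    |phi e1 e3 β (1 + e3*(1-β)) - (2*e1 + e3)| ≤ C1 B * (e1+e3)^2 := by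
  have hB := H.hB
  have he1 := H.he1
  have he3 := H.he3
  have he1s := H.e1_small
  have he3s := H.e3_small
  have he3B := H.e3B_small
  have he3β := H.e3β_small hβ0 hβB
  set u : ℝ := e3*(1-β) with hu
  have hβabs : |1 - β| ≤ B := by rw [abs_le]; constructor <;> linarith
  have huB : |u| ≤ e3*B := by
    rw [hu, abs_mul, abs_of_pos he3]
    exact mul_le_mul_of_nonneg_left hβabs he3.le
  have huhalf : |u| ≤ 1/2 := by linarith
  have hu1 : -(1/2:ℝ) ≤ u := neg_le_of_abs_le huhalf
  have hu2 : u ≤ 1/2 := le_of_abs_le huhalf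
  set r : ℝ := 1 + u with hr
  have hr0 : 0 < r := by rw [hr]; linarith
  set v : ℝ := e1*r + e3*β with hv
  clear_value u r v
  have hv0 : 0 ≤ v := by
    rw [hv]; have := mul_nonneg he3.le hβ0; nlinarith
  have hvle : v ≤ 2*(B+1)*(e1+e3) := by
    rw [hv, hr]
    have h1 : e1*u ≤ e1 := by nlinarith
    have h2 : e3*β ≤ e3*B := mul_le_mul_of_nonneg_left hβB he3.le
    nlinarith
  have hvhalf : v ≤ 1/2 := by
    rw [hv, hr]; nlinarith
  have hs0 : 0 < 1 - v := by linarith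
  -- log r bound
  have hlogr : |Real.log r - u| ≤ 2*u^2 := by
    rw [hr]; exact log_one_add_bound huhalf
  -- log (1 - v) bound
  have hlogs : |Real.log (1-v) + v| ≤ 2*v^2 := by
    have := log_one_add_bound (u := -v) (by rw [abs_neg, abs_of_nonneg hv0]; linarith)
    rw [show (1:ℝ) + -v = 1 - v by ring] at this
    rw [show Real.log (1-v) - -v = Real.log (1-v) + v by ring, neg_sq] at this
    exact this
  -- division term bound
  have hshalf : (1:ℝ)/2 ≤ 1 - v := by linarith
  have hdiveq : e1*r/(1-v) - e1 = e1*(r - (1-v))/(1-v) := by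
    field_simp
  have hr1v : |r - (1-v)| ≤ |u| + v := by
    rw [hr]
    rw [show 1 + u - (1-v) = u + v by ring]
    calc |u + v| ≤ |u| + |v| := abs_add_le _ _
      _ = |u| + v := by rw [abs_of_nonneg hv0]
  have hdivb : |e1*r/(1-v) - e1| ≤ 2*e1*(|u| + v) := by
    rw [hdiveq, abs_div, abs_of_pos hs0, abs_mul, abs_of_pos he1]
    rw [div_le_iff₀ hs0]
    have h1 : e1 * |r - (1-v)| ≤ e1 * (|u| + v) :=
      mul_le_mul_of_nonneg_left hr1v he1.le
    nlinarith [abs_nonneg (r - (1-v)), abs_nonneg u,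
      mul_nonneg (mul_nonneg he1.le (show (0:ℝ) ≤ |u|+v by linarith [abs_nonneg u]))
        (show (0:ℝ) ≤ 2*(1-v)-1 by linarith)]
  -- assemble
  have hphi : phi e1 e3 β r = Real.log r - Real.log (1-v) + e1*r/(1-v) := by
    unfold phi
    rw [show 1 - e1*r - e3*β = 1 - v by rw [hv]; ring]
  have hsum : u + v + e1 = 2*e1 + e3 + e1*u := by
    rw [hv, hr, hu]; ring
  have hdecomp : phi e1 e3 β r - (2*e1 + e3)
      = (Real.log r - u) - (Real.log (1-v) + v) + (e1*r/(1-v) - e1) + e1*u := by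
    rw [hphi]; linarith [hsum]
  have he1u : |e1*u| ≤ e1*(e3*B) := by
    rw [abs_mul, abs_of_pos he1]
    exact mul_le_mul_of_nonneg_left huB he1.le
  have htotal : |phi e1 e3 β r - (2*e1 + e3)|
      ≤ 2*u^2 + 2*v^2 + 2*e1*(|u| + v) + e1*(e3*B) := by
    rw [hdecomp]
    calc |Real.log r - u - (Real.log (1-v) + v) + (e1*r/(1-v) - e1) + e1*u|
        ≤ |Real.log r - u - (Real.log (1-v) + v) + (e1*r/(1-v) - e1)| + |e1*u| :=
          abs_add_le _ _
      _ ≤ |Real.log r - u - (Real.log (1-v) + v)| + |e1*r/(1-v) - e1| + |e1*u| := by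
          linarith [abs_add_le (Real.log r - u - (Real.log (1-v) + v)) (e1*r/(1-v) - e1)]
      _ ≤ |Real.log r - u| + |Real.log (1-v) + v| + |e1*r/(1-v) - e1| + |e1*u| := by
          linarith [abs_sub (Real.log r - u) (Real.log (1-v) + v)]
      _ ≤ 2*u^2 + 2*v^2 + 2*e1*(|u| + v) + e1*(e3*B) := by linarith
  -- final numeric bound
  have hBe1 : 0 ≤ e1*B := mul_nonneg he1.le (by linarith)
  have h1 : |u| ≤ (B+1)*(e1+e3) := by nlinarith [abs_nonneg u]
  have hu2b : u^2 ≤ (B+1)^2*(e1+e3)^2 := by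
    nlinarith [abs_nonneg u, sq_abs u, sq_nonneg ((B+1)*(e1+e3) - |u|)]
  have hv2b : v^2 ≤ 4*(B+1)^2*(e1+e3)^2 := by
    nlinarith [sq_nonneg (2*(B+1)*(e1+e3) - v)]
  have h3 : |u| + v ≤ 3*(B+1)*(e1+e3) := by linarith
  have hmid : 2*e1*(|u| + v) ≤ 6*(B+1)*(e1+e3)^2 := by
    have h4 : 2*e1*(|u|+v) ≤ (2*(e1+e3))*(3*(B+1)*(e1+e3)) :=
      mul_le_mul (by linarith) h3 (by positivity) (by positivity)
    nlinarith [h4]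
  have hlast : e1*(e3*B) ≤ (B+1)*(e1+e3)^2 := by
    nlinarith [sq_nonneg e1, sq_nonneg e3, mul_pos he1 he3]
  have hB1 : 7*((B+1)*(e1+e3)^2) ≤ 7*((B+1)^2*(e1+e3)^2) := by
    nlinarith [sq_nonneg (e1+e3)]
  have hp : 0 ≤ (B+1)^2*(e1+e3)^2 := by positivity
  rw [C1]
  linarith

theorem C1_pos {B : ℝ} (hB : 1 ≤ B) : 0 < C1 B := by rw [C1]; nlinarith

theorem eps_sq_small {B e1 e3 : ℝ} (H : Sm B e1 e3) :
    6 * C1 B * (e1+e3)^2 ≤ 1/1000 := by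
  have hB := H.hB
  have hεK : (e1+e3)*(100000*(B+1)^2) ≤ 2 := by linarith [H.key1, H.key3]
  have hεK0 : 0 ≤ (e1+e3)*(100000*(B+1)^2) := by
    apply mul_nonneg (by linarith [H.he1, H.he3]); nlinarith
  have hεK2 : ((e1+e3)*(100000*(B+1)^2))^2 ≤ 4 := by nlinarith
  have haux : (4:ℝ) ≤ (B+1)^2 := by nlinarith
  have hkey := mul_le_mul_of_nonneg_left haux
    (mul_nonneg (sq_nonneg (e1+e3)) (sq_nonneg (B+1)))
  rw [C1]
  nlinarith [hεK2, hkey]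

/-- facts used repeatedly -/
theorem rbar_facts {B e1 e3 : ℝ} (H : Sm B e1 e3) {β : ℝ} (hβ0 : 0 ≤ β) (hβB : β ≤ B) :
    9/10 ≤ 1 + e3*(1-β) ∧ 1 + e3*(1-β) ≤ 11/10 ∧
      e1*(1 + e3*(1-β) + 6 * C1 B * (e1+e3)^2) < 1 - e3*β := by
  have hB := H.hB
  have he1 := H.he1
  have he3 := H.he3
  have he1s := H.e1_small
  have he3s := H.e3_small
  have he3B := H.e3B_small
  have he3β := H.e3β_small hβ0 hβB
  have habs : |e3*(1-β)| ≤ e3*B := by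
    rw [abs_mul, abs_of_pos he3]
    apply mul_le_mul_of_nonneg_left _ he3.le
    rw [abs_le]; constructor <;> linarith
  have h1 := neg_le_of_abs_le habs
  have h2 := le_of_abs_le habs
  have hts := eps_sq_small H
  have ht0 : 0 ≤ 6 * C1 B * (e1+e3)^2 := by
    have := C1_pos hB; positivity
  refine ⟨by linarith, by linarith, ?_⟩
  have hle : 1 + e3*(1-β) + 6 * C1 B * (e1+e3)^2 ≤ 2 := by linarith
  have := mul_le_mul_of_nonneg_left hle he1.le
  nlinarith

set_option maxHeartbeats 1000000 in
/-- main quantitative estimate on any root of phi = χ -/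
theorem root_close {B e1 e3 : ℝ} (H : Sm B e1 e3) {β : ℝ} (hβ0 : 0 ≤ β) (hβB : β ≤ B)
    {ρ χ : ℝ} (hχ : |χ - (2*e1 + e3)| ≤ C1 B * (e1+e3)^2)
    (hρ0 : 0 < ρ) (hρM : e1*ρ < 1 - e3*β) (hphi : phi e1 e3 β ρ = χ) :
    |ρ - (1 + e3*(1-β))| ≤ 6 * C1 B * (e1+e3)^2 := by
  have hB := H.hB
  have he1 := H.he1
  have he3 := H.he3
  obtain ⟨hrb1, hrb2, hrbM⟩ := rbar_facts H hβ0 hβB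
  have hts := eps_sq_small H
  have hC1 := C1_pos hB
  set rbar : ℝ := 1 + e3*(1-β) with hrbar
  set t : ℝ := 6 * C1 B * (e1+e3)^2 with ht
  have ht0 : 0 < t := by rw [ht]; positivity
  have ht3 : t/3 = 2 * C1 B * (e1+e3)^2 := by rw [ht]; ring
  have hχ1 := le_of_abs_le hχ
  have hχ2 := neg_le_of_abs_le hχ
  have hpb1 := le_of_abs_le (phi_rbar H hβ0 hβB)
  have hpb2 := neg_le_of_abs_le (phi_rbar H hβ0 hβB)
  have hrbart : e1*(rbar + t) < 1 - e3*β := hrbM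
  have hub : ρ ≤ rbar + t := by
    by_contra hlt
    push_neg at hlt
    have h1 : phi e1 e3 β (rbar + t) < phi e1 e3 β ρ :=
      phi_lt_phi he1 he3.le hβ0 (by linarith) hlt hρM
    have hinc : Real.log (rbar + t) - Real.log rbar
        ≤ phi e1 e3 β (rbar + t) - phi e1 e3 β rbar :=
      phi_increment he1 he3.le hβ0 (by linarith) (by linarith) hrbart
    have hlog := log_diff_ge (a := rbar) (t := t) (by linarith) ht0.le
    have hdd : t/3 ≤ t/(rbar + t) :=
      div_le_div₀ ht0.le le_rfl (by linarith) (by linarith)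
    rw [hphi] at h1
    linarith
  have hlb : rbar - t ≤ ρ := by
    by_contra hlt
    push_neg at hlt
    have hrbM' : e1*rbar < 1 - e3*β := by nlinarith
    have h1 : phi e1 e3 β ρ < phi e1 e3 β (rbar - t) :=
      phi_lt_phi he1 he3.le hβ0 hρ0 hlt (by nlinarith)
    have hinc : Real.log rbar - Real.log (rbar - t)
        ≤ phi e1 e3 β rbar - phi e1 e3 β (rbar - t) :=
      phi_increment he1 he3.le hβ0 (by linarith) (by linarith) hrbM'
    have hlog := log_diff_ge (a := rbar - t) (t := t) (by linarith) ht0.le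
    rw [show rbar - t + t = rbar by ring] at hlog
    have hdd : t/3 ≤ t/rbar :=
      div_le_div₀ ht0.le le_rfl (by linarith) (by linarith)
    rw [hphi] at h1
    linarith
  rw [abs_le]; constructor <;> linarith

/-- if χ is too large, the root exceeds the approximate root -/
theorem rbar_lt_root {B e1 e3 : ℝ} (H : Sm B e1 e3) {β : ℝ} (hβ0 : 0 ≤ β) (hβB : β ≤ B)
    {ρ χ : ℝ} (hχ : 2*e1 + e3 + C1 B * (e1+e3)^2 < χ)
    (hρ0 : 0 < ρ) (hρM : e1*ρ < 1 - e3*β) (hphi : phi e1 e3 β ρ = χ) :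
    1 + e3*(1-β) < ρ := by
  obtain ⟨hrb1, hrb2, hrbM⟩ := rbar_facts H hβ0 hβB
  have hC1 := C1_pos H.hB
  have hts := eps_sq_small H
  have ht0 : 0 ≤ 6 * C1 B * (e1+e3)^2 := by positivity
  have hrbM' : e1*(1 + e3*(1-β)) < 1 - e3*β := by nlinarith [H.he1.le]
  by_contra h
  push_neg at h
  have h1 : phi e1 e3 β ρ ≤ phi e1 e3 β (1 + e3*(1-β)) :=
    phi_le_phi H.he1 H.he3.le hβ0 hρ0 h hrbM'
  have h2 := le_of_abs_le (phi_rbar H hβ0 hβB)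
  rw [hphi] at h1
  linarith

/-- if χ is too small, the root is below the approximate root -/
theorem root_lt_rbar {B e1 e3 : ℝ} (H : Sm B e1 e3) {β : ℝ} (hβ0 : 0 ≤ β) (hβB : β ≤ B)
    {ρ χ : ℝ} (hχ : χ < 2*e1 + e3 - C1 B * (e1+e3)^2)
    (hρ0 : 0 < ρ) (hρM : e1*ρ < 1 - e3*β) (hphi : phi e1 e3 β ρ = χ) :
    ρ < 1 + e3*(1-β) := by
  obtain ⟨hrb1, hrb2, hrbM⟩ := rbar_facts H hβ0 hβB
  by_contra h
  push_neg at h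
  have h1 : phi e1 e3 β (1 + e3*(1-β)) ≤ phi e1 e3 β ρ :=
    phi_le_phi H.he1 H.he3.le hβ0 (by linarith) h hρM
  have h2 := neg_le_of_abs_le (phi_rbar H hβ0 hβB)
  rw [hphi] at h1
  linarith

theorem phi_eq_log {e1 e3 β r : ℝ} (hr : 0 < r) (hs : 0 < 1 - e1*r - e3*β) :
    Real.log (r/(1 - e1*r - e3*β)) + e1*r/(1 - e1*r - e3*β) = phi e1 e3 β r := by
  unfold phi
  rw [Real.log_div hr.ne' hs.ne']

end EP2


open EP2

/-- Rigorous form of the paper's claim (Section 2.1, via (2.12)) for the equilibrium of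
the second entropy–mobility pair: for small ε₁, ε₃ there is an a.e.-unique admissible
normalized density r whose entropy variable u₂ is a.e. constant, and it satisfies
r = 1 + ε₃(1 - b) + O((ε₁ + ε₃)²) uniformly a.e. -/
theorem equilibrium_pair2_expansion
    (d : ℕ) (Ω : Set (EuclideanSpace ℝ (Fin d))) (hΩ : MeasurableSet Ω)
    (hΩvol : volume Ω = 1)
    (B : ℝ) (b : EuclideanSpace ℝ (Fin d) → ℝ) (hbmeas : Measurable b)
    (hb0 : ∀ x, 0 ≤ b x) (hbB : ∀ x, b x ≤ B)
    (hbint : ∫ x, b x ∂(volume.restrict Ω) = 1) :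
    ∃ ε₀ > (0 : ℝ), ∃ C > (0 : ℝ),
      ∀ ε₁ ε₃ : ℝ, 0 < ε₁ → ε₁ ≤ ε₀ → 0 < ε₃ → ε₃ ≤ ε₀ →
        (∃ r : EuclideanSpace ℝ (Fin d) → ℝ, Measurable r ∧
          (∀ᵐ x ∂(volume.restrict Ω), 0 < r x ∧ r x < (1 - ε₃ * b x) / ε₁) ∧
          (∃ χ : ℝ, ∀ᵐ x ∂(volume.restrict Ω),
            Real.log (r x / (1 - ε₁ * r x - ε₃ * b x))
              + ε₁ * r x / (1 - ε₁ * r x - ε₃ * b x) = χ) ∧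
          ∫ x, r x ∂(volume.restrict Ω) = 1) ∧
        (∀ r₁ r₂ : EuclideanSpace ℝ (Fin d) → ℝ,
          (Measurable r₁ ∧
            (∀ᵐ x ∂(volume.restrict Ω), 0 < r₁ x ∧ r₁ x < (1 - ε₃ * b x) / ε₁) ∧
            (∃ χ : ℝ, ∀ᵐ x ∂(volume.restrict Ω),
              Real.log (r₁ x / (1 - ε₁ * r₁ x - ε₃ * b x))
                + ε₁ * r₁ x / (1 - ε₁ * r₁ x - ε₃ * b x) = χ) ∧
            ∫ x, r₁ x ∂(volume.restrict Ω) = 1) →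
          (Measurable r₂ ∧
            (∀ᵐ x ∂(volume.restrict Ω), 0 < r₂ x ∧ r₂ x < (1 - ε₃ * b x) / ε₁) ∧
            (∃ χ : ℝ, ∀ᵐ x ∂(volume.restrict Ω),
              Real.log (r₂ x / (1 - ε₁ * r₂ x - ε₃ * b x))
                + ε₁ * r₂ x / (1 - ε₁ * r₂ x - ε₃ * b x) = χ) ∧
            ∫ x, r₂ x ∂(volume.restrict Ω) = 1) →
          r₁ =ᵐ[volume.restrict Ω] r₂) ∧
        (∀ r : EuclideanSpace ℝ (Fin d) → ℝ,
          (Measurable r ∧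
            (∀ᵐ x ∂(volume.restrict Ω), 0 < r x ∧ r x < (1 - ε₃ * b x) / ε₁) ∧
            (∃ χ : ℝ, ∀ᵐ x ∂(volume.restrict Ω),
              Real.log (r x / (1 - ε₁ * r x - ε₃ * b x))
                + ε₁ * r x / (1 - ε₁ * r x - ε₃ * b x) = χ) ∧
            ∫ x, r x ∂(volume.restrict Ω) = 1) →
          ∀ᵐ x ∂(volume.restrict Ω),
            |r x - 1 - ε₃ * (1 - b x)| ≤ C * (ε₁ + ε₃) ^ 2) := by
  classical
  set μ := volume.restrict Ω with hμdef
  haveI : IsFiniteMeasure μ :=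
    ⟨by rw [hμdef, Measure.restrict_apply_univ, hΩvol]; exact ENNReal.one_lt_top⟩
  have hμuniv : μ Set.univ = 1 := by
    rw [hμdef, Measure.restrict_apply_univ, hΩvol]
  have hμtoReal : μ.real Set.univ = 1 := by simp [Measure.real, hμuniv]
  have hbi : Integrable b μ :=
    Integrable.mono' (integrable_const B) hbmeas.aestronglyMeasurable
      (Filter.Eventually.of_forall fun x => by
        rw [Real.norm_eq_abs, abs_of_nonneg (hb0 x)]; exact hbB x)
  have hB1 : 1 ≤ B := by
    have h1 : ∫ x, b x ∂μ ≤ ∫ _x, B ∂μ :=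
      integral_mono hbi (integrable_const B) hbB
    rw [integral_const, hμtoReal, one_smul, hbint] at h1
    exact h1
  have hBpos : (0:ℝ) < B + 1 := by linarith
  refine ⟨eps0 B, by rw [eps0]; positivity, 600*(B+1)^2, by positivity, ?_⟩
  intro e1 e3 he1 hs1 he3 hs3
  have H : Sm B e1 e3 := ⟨hB1, he1, he3, hs1, hs3⟩
  have hcl : ∀ x, clamp B (b x) = b x := fun x => clamp_eq (hb0 x) (hbB x)
  have spec' : ∀ (χ : ℝ) x, 0 < Rt e1 e3 B χ (b x) ∧
      e1 * Rt e1 e3 B χ (b x) < 1 - e3 * b x ∧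
      phi e1 e3 (b x) (Rt e1 e3 B χ (b x)) = χ := by
    intro χ x
    have h := Rt_spec H χ (b x)
    rwa [hcl x] at h
  have hint : ∀ χ : ℝ, Integrable (fun x => Rt e1 e3 B χ (b x)) μ := by
    intro χ
    refine Integrable.mono' (integrable_const (1/e1))
      ((Rt_measurable H χ).comp hbmeas).aestronglyMeasurable
      (Filter.Eventually.of_forall fun x => ?_)
    obtain ⟨h0, hM, _⟩ := spec' χ x
    rw [Real.norm_eq_abs, abs_of_pos h0, le_div_iff₀ he1]
    have := mul_nonneg he3.le (hb0 x)
    nlinarith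
  set I : ℝ → ℝ := fun χ => ∫ x, Rt e1 e3 B χ (b x) ∂μ with hIdef
  have key : ∀ a c : ℝ, a ≤ c → 0 ≤ I c - I a ∧ I c - I a ≤ (c - a)/e1 := by
    intro a c h
    have hmono : (fun x => Rt e1 e3 B a (b x)) ≤ fun x => Rt e1 e3 B c (b x) :=
      fun x => (Rt_chi_mono_lip H h (b x)).1
    have h1 : I a ≤ I c := integral_mono (hint a) (hint c) hmono
    have h2 : I c - I a = ∫ x, (Rt e1 e3 B c (b x) - Rt e1 e3 B a (b x)) ∂μ :=
      (integral_sub (hint c) (hint a)).symm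
    have h3 : ∫ x, (Rt e1 e3 B c (b x) - Rt e1 e3 B a (b x)) ∂μ
        ≤ ∫ _x, ((c-a)/e1 : ℝ) ∂μ :=
      integral_mono ((hint c).sub (hint a)) (integrable_const _)
        (fun x => (Rt_chi_mono_lip H h (b x)).2)
    rw [integral_const, hμtoReal, one_smul] at h3
    exact ⟨by linarith, by linarith⟩
  have hlip : LipschitzWith ⟨1/e1, by positivity⟩ I := by
    apply LipschitzWith.of_dist_le_mul
    intro χ χ'
    rcases le_total χ χ' with h | h
    · obtain ⟨h1, h2⟩ := key χ χ' h
      change dist (I _) (I _) ≤ 1/e1 * dist _ _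
      rw [Real.dist_eq, Real.dist_eq,
        abs_of_nonpos (by linarith), abs_of_nonpos (by linarith)]
      have : (χ' - χ)/e1 = 1/e1 * (χ' - χ) := by ring
      linarith [h2, this]
    · obtain ⟨h1, h2⟩ := key χ' χ h
      change dist (I _) (I _) ≤ 1/e1 * dist _ _
      rw [Real.dist_eq, Real.dist_eq,
        abs_of_nonneg (by linarith), abs_of_nonneg (by linarith)]
      have : (χ - χ')/e1 = 1/e1 * (χ - χ') := by ring
      linarith [h2, this]
  have hIlo : I (-1) ≤ 1/2 := by
    have h1 : I (-1) ≤ ∫ _x, (1/2 : ℝ) ∂μ :=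
      integral_mono (hint (-1)) (integrable_const _) (fun x => Rt_le_half H (b x))
    rwa [integral_const, hμtoReal, one_smul] at h1
  have hIhi : 2 ≤ I 3 := by
    have h1 : ∫ _x, (2:ℝ) ∂μ ≤ I 3 :=
      integral_mono (integrable_const _) (hint 3) (fun x => Rt_ge_two H (b x))
    rwa [integral_const, hμtoReal, one_smul] at h1
  obtain ⟨χs, _hχsmem, hχs⟩ := intermediate_value_Icc (by norm_num : (-1:ℝ) ≤ 3)
    (hlip.continuous.continuousOn) (⟨by linarith, by linarith⟩ : (1:ℝ) ∈ Set.Icc (I (-1)) (I 3))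
  -- identification of any solution with the root function
  have hsol : ∀ (r : EuclideanSpace ℝ (Fin d) → ℝ) (χ : ℝ),
      (∀ᵐ x ∂μ, 0 < r x ∧ r x < (1 - e3 * b x) / e1) →
      (∀ᵐ x ∂μ, Real.log (r x / (1 - e1 * r x - e3 * b x))
        + e1 * r x / (1 - e1 * r x - e3 * b x) = χ) →
      r =ᵐ[μ] fun x => Rt e1 e3 B χ (b x) := by
    intro r χ hbd hc
    filter_upwards [hbd, hc] with x hx hcx
    obtain ⟨hx0, hxM⟩ := hx
    have hxM' : e1 * r x < 1 - e3 * b x := by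
      rw [lt_div_iff₀ he1] at hxM; linarith
    have hs0 : 0 < 1 - e1 * r x - e3 * b x := by
      have := mul_pos he1 hx0; linarith
    have hphi : phi e1 e3 (b x) (r x) = χ := by
      rw [← phi_eq_log hx0 hs0]; exact hcx
    obtain ⟨h0, hM, hps⟩ := spec' χ x
    exact root_unique he1 he3.le (hb0 x) hx0 hxM' h0 hM (hphi.trans hps.symm)
  have hcore : ∀ χ χ' : ℝ, χ ≤ χ' → I χ = 1 → I χ' = 1 →
      (fun x => Rt e1 e3 B χ (b x)) =ᵐ[μ] (fun x => Rt e1 e3 B χ' (b x)) := by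
    intro χ χ' h hI hI'
    have hnn : 0 ≤ᵐ[μ] fun x => Rt e1 e3 B χ' (b x) - Rt e1 e3 B χ (b x) :=
      Filter.Eventually.of_forall fun x =>
        sub_nonneg.2 (Rt_chi_mono_lip H h (b x)).1
    have hz : ∫ x, (Rt e1 e3 B χ' (b x) - Rt e1 e3 B χ (b x)) ∂μ = 0 := by
      rw [integral_sub (hint χ') (hint χ)]
      have h1 : I χ = ∫ x, Rt e1 e3 B χ (b x) ∂μ := rfl
      have h2 : I χ' = ∫ x, Rt e1 e3 B χ' (b x) ∂μ := rfl
      rw [← h1, ← h2, hI, hI']; ring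
    have := (integral_eq_zero_iff_of_nonneg_ae hnn ((hint χ').sub (hint χ))).1 hz
    filter_upwards [this] with x hx
    have hx' : Rt e1 e3 B χ' (b x) - Rt e1 e3 B χ (b x) = 0 := hx
    linarith
  refine ⟨?_, ?_, ?_⟩
  -- existence
  · refine ⟨fun x => Rt e1 e3 B χs (b x), (Rt_measurable H χs).comp hbmeas,
      Filter.Eventually.of_forall fun x => ?_, ⟨χs, Filter.Eventually.of_forall fun x => ?_⟩, hχs⟩
    · obtain ⟨h0, hM, _⟩ := spec' χs x
      exact ⟨h0, by rw [lt_div_iff₀ he1]; linarith⟩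
    · obtain ⟨h0, hM, hps⟩ := spec' χs x
      have hs0 : 0 < 1 - e1 * Rt e1 e3 B χs (b x) - e3 * b x := by linarith
      rw [phi_eq_log h0 hs0]
      exact hps
  -- uniqueness
  · rintro r₁ r₂ ⟨m1, bd1, ⟨χ1, c1⟩, i1⟩ ⟨m2, bd2, ⟨χ2, c2⟩, i2⟩
    have h1 := hsol r₁ χ1 bd1 c1
    have h2 := hsol r₂ χ2 bd2 c2
    have hI1 : I χ1 = 1 := (integral_congr_ae h1).symm.trans i1
    have hI2 : I χ2 = 1 := (integral_congr_ae h2).symm.trans i2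
    rcases le_total χ1 χ2 with h | h
    · exact h1.trans ((hcore χ1 χ2 h hI1 hI2).trans h2.symm)
    · exact h1.trans ((hcore χ2 χ1 h hI2 hI1).symm.trans h2.symm)
  -- estimate
  · rintro r ⟨m, bd, ⟨χ, hc⟩, hi⟩
    have hr := hsol r χ bd hc
    have hIχ : I χ = 1 := (integral_congr_ae hr).symm.trans hi
    have hrint2 : Integrable (fun x => e3*(1 - b x)) μ := by
      have h := ((integrable_const (1:ℝ)).sub hbi).const_mul e3
      simpa [Pi.sub_apply] using h
    have hrint : Integrable (fun x => 1 + e3*(1 - b x)) μ := by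
      have h := (integrable_const (1:ℝ)).add hrint2
      simpa [Pi.add_apply] using h
    have hsub0 : ∫ x, (1 - b x) ∂μ = 0 := by
      rw [integral_sub (integrable_const 1) hbi, integral_const, hμtoReal, one_smul, hbint]
      ring
    have hIrbar : ∫ x, (1 + e3*(1 - b x)) ∂μ = 1 := by
      rw [integral_add (integrable_const 1) hrint2, integral_const_mul, hsub0,
        integral_const, hμtoReal, one_smul]
      ring
    have hχloc : |χ - (2*e1 + e3)| ≤ C1 B * (e1+e3)^2 := by
      by_contra hcon
      push_neg at hcon
      rcases lt_abs.mp hcon with hgt | hgt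
      · have hgt' : 2*e1 + e3 + C1 B * (e1+e3)^2 < χ := by linarith
        have hlt : ∀ x, 1 + e3*(1 - b x) < Rt e1 e3 B χ (b x) := fun x =>
          rbar_lt_root H (hb0 x) (hbB x) hgt' (spec' χ x).1 (spec' χ x).2.1 (spec' χ x).2.2
        have hz : ∫ x, (Rt e1 e3 B χ (b x) - (1 + e3*(1 - b x))) ∂μ = 0 := by
          rw [integral_sub (hint χ) hrint]
          have h1 : I χ = ∫ x, Rt e1 e3 B χ (b x) ∂μ := rfl
          rw [← h1, hIχ, hIrbar]; ring
        have hzz := (integral_eq_zero_iff_of_nonneg_ae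
          (Filter.Eventually.of_forall fun x => by have := hlt x; simp only [Pi.zero_apply, Pi.sub_apply]; linarith)
          ((hint χ).sub hrint)).1 hz
        have hfalse : ∀ᵐ _x ∂μ, False := by
          filter_upwards [hzz] with x hx
          have hx' : Rt e1 e3 B χ (b x) - (1 + e3*(1 - b x)) = 0 := hx
          have := hlt x
          linarith
        have hμ0 : μ = 0 := ae_eq_bot.mp (Filter.eventually_false_iff_eq_bot.mp hfalse)
        rw [hμ0] at hμuniv
        simp at hμuniv
      · have hgt' : χ < 2*e1 + e3 - C1 B * (e1+e3)^2 := by linarith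
        have hlt : ∀ x, Rt e1 e3 B χ (b x) < 1 + e3*(1 - b x) := fun x =>
          root_lt_rbar H (hb0 x) (hbB x) hgt' (spec' χ x).1 (spec' χ x).2.1 (spec' χ x).2.2
        have hz : ∫ x, ((1 + e3*(1 - b x)) - Rt e1 e3 B χ (b x)) ∂μ = 0 := by
          rw [integral_sub hrint (hint χ)]
          have h1 : I χ = ∫ x, Rt e1 e3 B χ (b x) ∂μ := rfl
          rw [← h1, hIχ, hIrbar]; ring
        have hzz := (integral_eq_zero_iff_of_nonneg_ae
          (Filter.Eventually.of_forall fun x => by have := hlt x; simp only [Pi.zero_apply, Pi.sub_apply]; linarith)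
          (hrint.sub (hint χ))).1 hz
        have hfalse : ∀ᵐ _x ∂μ, False := by
          filter_upwards [hzz] with x hx
          have hx' : (1 + e3*(1 - b x)) - Rt e1 e3 B χ (b x) = 0 := hx
          have := hlt x
          linarith
        have hμ0 : μ = 0 := ae_eq_bot.mp (Filter.eventually_false_iff_eq_bot.mp hfalse)
        rw [hμ0] at hμuniv
        simp at hμuniv
    filter_upwards [hr] with x hx
    have hest := root_close H (hb0 x) (hbB x) hχloc
      (spec' χ x).1 (spec' χ x).2.1 (spec' χ x).2.2
    rw [hx, show Rt e1 e3 B χ (b x) - 1 - e3*(1 - b x)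
      = Rt e1 e3 B χ (b x) - (1 + e3*(1 - b x)) by ring]
    calc |Rt e1 e3 B χ (b x) - (1 + e3*(1 - b x))| ≤ 6 * C1 B * (e1+e3)^2 := hest
      _ = 600*(B+1)^2 * (e1+e3)^2 := by rw [C1]; ring
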